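/- Suppose Slater's condition holds: there exists ξ̂ ∈ Ξ with g(ξ̂, θ) < 0 for every θ ∈ Θ. Then the optimal value of the convex semi-infinite program equals the max–min value with ν sampled constraints: inf { ψ(ξ) : ξ ∈ Ξ, g(ξ, θ) ≤ 0 for all θ ∈ Θ } = sup over (θ₁, …, θ_ν) ∈ Θ^ν of inf { ψ(ξ) : ξ ∈ Ξ, g(ξ, θ_k) ≤ 0 for all k = 1, …, ν }. -/

import Mathlib

open Set Module

lemma radon_step {ν : ℕ} {ι : Type*} (K : Set (EuclideanSpace ℝ (Fin ν)))
    (hK : Convex ℝ K)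
    (S : ι → Set (EuclideanSpace ℝ (Fin ν))) (hS : ∀ i, Convex ℝ (S i))
    (zhat : EuclideanSpace ℝ (Fin ν)) (hz : ∀ i, zhat ∈ S i)
    (f : Fin (ν + 1) → ι)
    (x : Fin (ν + 1) → EuclideanSpace ℝ (Fin ν))
    (hxK : ∀ j, x j ∈ K)
    (hxS : ∀ j j', j ≠ j' → x j ∈ S (f j')) :
    ∃ q, q ∈ K ∧ ∀ j, q ∈ S (f j) := by
  let p : Fin (ν + 2) → EuclideanSpace ℝ (Fin ν) := Fin.snoc x zhat
  have hcard : Fintype.card (Fin (ν + 2)) = ν + 2 := Fintype.card_fin _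
  have h_ind : ¬ AffineIndependent ℝ p := by
    rw [← finrank_vectorSpan_le_iff_not_affineIndependent ℝ p hcard]
    refine (Submodule.finrank_le _).trans ?_
    simp [finrank_euclideanSpace_fin]
  obtain ⟨A, q, hqA, hqAc⟩ := Convex.radon_partition (𝕜 := ℝ) h_ind
  have key : ∀ B : Set (Fin (ν + 2)), Fin.last (ν + 1) ∉ B →
      q ∈ convexHull ℝ (p '' B) → q ∈ convexHull ℝ (p '' Bᶜ) →
      q ∈ K ∧ ∀ j, q ∈ S (f j) := by
    intro B hlast hqB hqBc
    have hpB : ∀ i ∈ B, ∃ j, Fin.castSucc j = i ∧ p i = x j := by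
      intro i hi
      have hne : i ≠ Fin.last (ν + 1) := fun h => hlast (h ▸ hi)
      obtain ⟨j, hj⟩ := Fin.exists_castSucc_eq.2 hne
      exact ⟨j, hj, by rw [← hj]; simp [p, Fin.snoc_castSucc]⟩
    constructor
    · refine convexHull_min ?_ hK hqB
      rintro v ⟨i, hi, rfl⟩
      obtain ⟨j, -, hpi⟩ := hpB i hi
      rw [hpi]; exact hxK j
    · intro j
      by_cases hjB : Fin.castSucc j ∈ B
      · refine convexHull_min ?_ (hS (f j)) hqBc
        rintro v ⟨i, hi, rfl⟩
        by_cases hil : i = Fin.last (ν + 1)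
        · rw [hil]; simpa [p, Fin.snoc_last] using hz (f j)
        · obtain ⟨j', hj'⟩ := Fin.exists_castSucc_eq.2 hil
          have : p i = x j' := by rw [← hj']; simp [p, Fin.snoc_castSucc]
          rw [this]
          refine hxS j' j (fun h => ?_)
          exact hi (by rw [← hj', h]; exact hjB)
      · refine convexHull_min ?_ (hS (f j)) hqB
        rintro v ⟨i, hi, rfl⟩
        obtain ⟨j', hj', hpi⟩ := hpB i hi
        rw [hpi]
        refine hxS j' j (fun h => hjB ?_)
        rw [← h, hj']; exact hi
  by_cases hl : Fin.last (ν + 1) ∈ A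
  · exact ⟨q, key Aᶜ (by simpa) hqAc (by rwa [compl_compl])⟩
  · exact ⟨q, key A hl hqA hqAc⟩

theorem stmt_10
    (ν μ : ℕ) (hν : 1 ≤ ν) (hμ : 1 ≤ μ)
    (Ξ : Set (EuclideanSpace ℝ (Fin ν)))
    (hΞne : Ξ.Nonempty) (hΞcl : IsClosed Ξ) (hΞconv : Convex ℝ Ξ)
    (Θ : Set (EuclideanSpace ℝ (Fin μ)))
    (hΘne : Θ.Nonempty) (hΘcpt : IsCompact Θ)
    (ψ : EuclideanSpace ℝ (Fin ν) → ℝ)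
    (hψcont : Continuous ψ) (hψnonneg : ∀ ξ, 0 ≤ ψ ξ) (hψconv : ConvexOn ℝ Set.univ ψ)
    (g : EuclideanSpace ℝ (Fin ν) → EuclideanSpace ℝ (Fin μ) → ℝ)
    (hgcont : Continuous fun p : EuclideanSpace ℝ (Fin ν) × EuclideanSpace ℝ (Fin μ) =>
      g p.1 p.2)
    (hgconv : ∀ θ ∈ Θ, ConvexOn ℝ Set.univ fun ξ => g ξ θ)
    -- Slater's condition
    (hSlater : ∃ ξhat ∈ Ξ, ∀ θ ∈ Θ, g ξhat θ < 0) :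
    sInf (ψ '' {ξ ∈ Ξ | ∀ θ ∈ Θ, g ξ θ ≤ 0}) =
      sSup ((fun θs : Fin ν → EuclideanSpace ℝ (Fin μ) =>
          sInf (ψ '' {ξ ∈ Ξ | ∀ k : Fin ν, g ξ (θs k) ≤ 0})) ''
        {θs : Fin ν → EuclideanSpace ℝ (Fin μ) | ∀ k, θs k ∈ Θ}) := by
  classical
  obtain ⟨ξh, hξhΞ, hξhg⟩ := hSlater
  -- abbreviations
  set Feas : Set (EuclideanSpace ℝ (Fin ν)) := {ξ ∈ Ξ | ∀ θ ∈ Θ, g ξ θ ≤ 0} with hFeasdef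
  set TT : Set (Fin ν → EuclideanSpace ℝ (Fin μ)) := {θs | ∀ k, θs k ∈ Θ} with hTTdef
  set Samp : (Fin ν → EuclideanSpace ℝ (Fin μ)) → Set (EuclideanSpace ℝ (Fin ν)) :=
    fun θs => {ξ ∈ Ξ | ∀ k : Fin ν, g ξ (θs k) ≤ 0} with hSampdef
  set vl : (Fin ν → EuclideanSpace ℝ (Fin μ)) → ℝ := fun θs => sInf (ψ '' Samp θs) with hvldef
  set L : ℝ := sInf (ψ '' Feas) with hLdef
  set S : ℝ := sSup (vl '' TT) with hSdef
  show L = S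
  have hbdd : ∀ A : Set (EuclideanSpace ℝ (Fin ν)), BddBelow (ψ '' A) := by
    rintro A
    exact ⟨0, by rintro y ⟨x, -, rfl⟩; exact hψnonneg x⟩
  have hξhFeas : ξh ∈ Feas := ⟨hξhΞ, fun θ hθ => (hξhg θ hθ).le⟩
  have hFeasSamp : ∀ θs ∈ TT, Feas ⊆ Samp θs := by
    rintro θs hθs ξ ⟨h1, h2⟩
    exact ⟨h1, fun k => h2 (θs k) (hθs k)⟩
  have hvlL : ∀ θs ∈ TT, vl θs ≤ L :=
    fun θs hθs => csInf_le_csInf (hbdd _) ⟨ψ ξh, Set.mem_image_of_mem ψ hξhFeas⟩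
      (Set.image_mono (hFeasSamp θs hθs))
  have hTTne : TT.Nonempty := ⟨fun _ => hΘne.choose, fun _ => hΘne.choose_spec⟩
  have hSL : S ≤ L := by
    refine csSup_le (hTTne.image vl) ?_
    rintro y ⟨θs, hθs, rfl⟩
    exact hvlL θs hθs
  refine le_antisymm ?_ hSL
  by_contra hcon
  push_neg at hcon
  set c : ℝ := (S + L) / 2 with hcdef
  have hSc : S < c := by rw [hcdef]; linarith
  have hcL : c < L := by rw [hcdef]; linarith
  -- witnesses below level c for every sampled tuple
  have h1 : ∀ θs ∈ TT, ∃ x, x ∈ Ξ ∧ (∀ k, g x (θs k) ≤ 0) ∧ ψ x < c := by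
    intro θs hθs
    have hle : vl θs ≤ S :=
      le_csSup ⟨L, by rintro y ⟨θs', hθs', rfl⟩; exact hvlL θs' hθs'⟩
        (Set.mem_image_of_mem vl hθs)
    have hne : (ψ '' Samp θs).Nonempty :=
      ⟨ψ ξh, Set.mem_image_of_mem ψ (hFeasSamp θs hθs hξhFeas)⟩
    obtain ⟨y, ⟨x, hx, rfl⟩, hyc⟩ := exists_lt_of_csInf_lt hne (lt_of_le_of_lt hle hSc)
    exact ⟨x, hx.1, hx.2, hyc⟩
  -- uniform Slater margin
  have hgcont1 : ∀ x : EuclideanSpace ℝ (Fin ν), Continuous fun θ => g x θ :=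
    fun x => hgcont.comp (continuous_const.prodMk continuous_id)
  obtain ⟨θm, hθm, hθmax⟩ := hΘcpt.exists_isMaxOn hΘne (hgcont1 ξh).continuousOn
  set δ : ℝ := -g ξh θm with hδdef
  have hδpos : 0 < δ := by rw [hδdef]; linarith [hξhg θm hθm]
  have hmargin : ∀ θ ∈ Θ, g ξh θ ≤ -δ := by
    intro θ hθ
    have h' : g ξh θ ≤ g ξh θm := hθmax hθ
    rw [hδdef]; linarith
  -- strictified witnesses
  have h2 : ∀ θs ∈ TT, ∃ y, y ∈ Ξ ∧ ψ y < c ∧ ∀ k, g y (θs k) < 0 := by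
    intro θs hθs
    obtain ⟨x, hxΞ, hxg, hxc⟩ := h1 θs hθs
    set a : ℝ := ψ ξh
    set b : ℝ := ψ x
    set d : ℝ := max (a - b) 0 with hddef
    have hd0 : 0 ≤ d := le_max_right _ _
    have hdab : a - b ≤ d := le_max_left _ _
    set m : ℝ := min ((c - b) / (2 * (d + 1))) (1 / 2) with hmdef
    have hm0 : 0 < m := lt_min (div_pos (by linarith) (by positivity)) (by norm_num)
    have hm1 : m ≤ 1 / 2 := min_le_right _ _
    have hmle : m ≤ (c - b) / (2 * (d + 1)) := min_le_left _ _
    refine ⟨m • ξh + (1 - m) • x, ?_, ?_, ?_⟩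
    · exact hΞconv hξhΞ hxΞ hm0.le (by linarith) (by ring)
    · have hcv := hψconv.2 (Set.mem_univ ξh) (Set.mem_univ x) hm0.le
        (by linarith : (0:ℝ) ≤ 1 - m) (by ring)
      have hmd : m * (d + 1) ≤ (c - b) / 2 := by
        have hmul := mul_le_mul_of_nonneg_right hmle (by positivity : (0:ℝ) ≤ d + 1)
        have heq : (c - b) / (2 * (d + 1)) * (d + 1) = (c - b) / 2 := by
          field_simp
        rw [heq] at hmul; exact hmul
      have hab : m * (a - b) ≤ m * d := by nlinarith
      have hexp : m * (d + 1) = m * d + m := by ring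
      calc ψ (m • ξh + (1 - m) • x) ≤ m * a + (1 - m) * b := by
            simpa [smul_eq_mul] using hcv
        _ = b + m * (a - b) := by ring
        _ ≤ b + m * d := by linarith
        _ < c := by linarith
    · intro k
      have hcv := (hgconv (θs k) (hθs k)).2 (Set.mem_univ ξh) (Set.mem_univ x) hm0.le
        (by linarith : (0:ℝ) ≤ 1 - m) (by ring)
      have := hmargin (θs k) (hθs k)
      have hx0 := hxg k
      calc g (m • ξh + (1 - m) • x) (θs k) ≤ m * g ξh (θs k) + (1 - m) * g x (θs k) := by
            simpa [smul_eq_mul] using hcv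
        _ ≤ m * (-δ) + (1 - m) * 0 := by
            refine add_le_add (mul_le_mul_of_nonneg_left this hm0.le) ?_
            exact mul_le_mul_of_nonneg_left hx0 (by linarith)
        _ < 0 := by nlinarith
  -- compactness of the tuple set
  have hTTcpt : IsCompact TT := by
    have h := isCompact_univ_pi (fun _ : Fin ν => hΘcpt)
    have heq : (Set.univ.pi fun _ : Fin ν => Θ) = TT := by
      ext; simp [Set.mem_pi, hTTdef]
    rwa [heq] at h
  -- extract a finite witness set via an open cover
  choose yf hyΞ hyc hyg using h2
  let U : TT → Set (Fin ν → EuclideanSpace ℝ (Fin μ)) :=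
    fun i => ⋂ k, (fun T => g (yf i.1 i.2) (T k)) ⁻¹' Set.Iio 0
  have hUopen : ∀ i, IsOpen (U i) := by
    intro i
    refine isOpen_iInter_of_finite fun k => ?_
    exact (hgcont.comp ((continuous_const : Continuous fun _ => yf i.1 i.2).prodMk
      (continuous_apply k))).isOpen_preimage _ isOpen_Iio
  have hcover : TT ⊆ ⋃ i : TT, U i := by
    intro T hT
    exact Set.mem_iUnion.2 ⟨⟨T, hT⟩, Set.mem_iInter.2 fun k => hyg T hT k⟩
  obtain ⟨t, ht⟩ := hTTcpt.elim_finite_subcover U hUopen hcover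
  set Y : Finset (EuclideanSpace ℝ (Fin ν)) := t.image (fun i => yf i.1 i.2) with hYdef
  have hYprop : ∀ y ∈ Y, y ∈ Ξ ∧ ψ y < c := by
    intro y hy
    rw [hYdef, Finset.mem_image] at hy
    obtain ⟨i, -, rfl⟩ := hy
    exact ⟨hyΞ i.1 i.2, hyc i.1 i.2⟩
  have hYwit : ∀ θs ∈ TT, ∃ y ∈ Y, ∀ k, g y (θs k) < 0 := by
    intro θs hθs
    obtain ⟨i, hi⟩ := Set.mem_iUnion.1 (ht hθs)
    simp only [Set.mem_iUnion, exists_prop] at hi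
    obtain ⟨hit, hiU⟩ := hi
    refine ⟨yf i.1 i.2, Finset.mem_image_of_mem _ hit, fun k => ?_⟩
    exact Set.mem_iInter.1 hiU k
  -- radius bound
  set R : ℝ := ‖ξh‖ + ∑ y ∈ Y, ‖y‖ with hRdef
  have hsumnn : (0:ℝ) ≤ ∑ y ∈ Y, ‖y‖ := Finset.sum_nonneg fun y _ => norm_nonneg y
  have hRξ : ‖ξh‖ ≤ R := by rw [hRdef]; linarith
  have hRy : ∀ y ∈ Y, ‖y‖ ≤ R := by
    intro y hy
    have := Finset.single_le_sum (f := fun y : EuclideanSpace ℝ (Fin ν) => ‖y‖)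
      (fun z _ => norm_nonneg z) hy
    rw [hRdef]; have h0 := norm_nonneg ξh; linarith
  -- the compact convex sets
  set C : {θ // θ ∈ Θ} → Set (EuclideanSpace ℝ (Fin ν)) :=
    fun θ => Ξ ∩ {x | ψ x ≤ c} ∩ {x | g x θ.1 ≤ 0} ∩ Metric.closedBall 0 R with hCdef
  have hmemC : ∀ (θ : {θ // θ ∈ Θ}) x,
      x ∈ C θ ↔ x ∈ Ξ ∧ ψ x ≤ c ∧ g x θ.1 ≤ 0 ∧ ‖x‖ ≤ R := by
    intro θ x
    simp [hCdef, Set.mem_inter_iff, mem_closedBall_zero_iff, and_assoc]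
  have hψlev : Convex ℝ {x : EuclideanSpace ℝ (Fin ν) | ψ x ≤ c} := by
    have := hψconv.convex_le c
    rwa [Set.sep_univ] at this
  have hglev : ∀ θ : {θ // θ ∈ Θ}, Convex ℝ {x : EuclideanSpace ℝ (Fin ν) | g x θ.1 ≤ 0} := by
    intro θ
    have := (hgconv θ.1 θ.2).convex_le 0
    rwa [Set.sep_univ] at this
  have hCconv : ∀ θ, Convex ℝ (C θ) :=
    fun θ => (((hΞconv.inter hψlev).inter (hglev θ)).inter (convex_closedBall 0 R))
  have hCcpt : ∀ θ, IsCompact (C θ) := by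
    intro θ
    refine IsCompact.of_isClosed_subset (isCompact_closedBall 0 R) ?_ (fun x hx => hx.2)
    refine IsClosed.inter (IsClosed.inter (IsClosed.inter hΞcl ?_) ?_) Metric.isClosed_closedBall
    · exact isClosed_le hψcont continuous_const
    · exact isClosed_le (hgcont.comp (continuous_id.prodMk continuous_const)) continuous_const
  -- witnesses within the ball
  have hW : ∀ θs ∈ TT, ∃ y, y ∈ Ξ ∧ ψ y < c ∧ ‖y‖ ≤ R ∧ ∀ k, g y (θs k) < 0 := by
    intro θs hθs
    obtain ⟨y, hyY, hyg'⟩ := hYwit θs hθs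
    obtain ⟨hy1, hy2⟩ := hYprop y hyY
    exact ⟨y, hy1, hy2, hRy y hyY, hyg'⟩
  -- finite intersection property for up to ν+1 sets
  have h4 : ∀ I : Finset {θ // θ ∈ Θ}, I.card ≤ ν + 1 → (⋂ θ ∈ I, C θ).Nonempty := by
    intro I hIcard
    rcases I.eq_empty_or_nonempty with rfl | hIne
    · simp
    obtain ⟨θ0, hθ0⟩ := hIne
    have hlen : I.toList.length = I.card := Finset.length_toList I
    rcases le_or_gt I.card ν with hle | hgt
    · -- at most ν sets: a single sampled tuple covers them
      set f : Fin ν → {θ // θ ∈ Θ} := fun k => I.toList.getD k θ0 with hfdef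
      have hcov : ∀ θ ∈ I, ∃ k : Fin ν, f k = θ := by
        intro θ hθ
        have : θ ∈ I.toList := (Finset.mem_toList).2 hθ
        obtain ⟨i, hi, hgi⟩ := List.mem_iff_getElem.1 this
        refine ⟨⟨i, lt_of_lt_of_le (hlen ▸ hi) hle⟩, ?_⟩
        rw [hfdef]
        simp only []
        rw [List.getD_eq_getElem I.toList θ0 (hlen ▸ hi)]
        exact hgi
      have hTTf : (fun k => (f k).1) ∈ TT := fun k => (f k).2
      obtain ⟨y, hy1, hy2, hy3, hy4⟩ := hW _ hTTf
      refine ⟨y, Set.mem_biInter fun θ hθ => ?_⟩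
      obtain ⟨k, hk⟩ := hcov θ hθ
      refine (hmemC θ y).2 ⟨hy1, hy2.le, ?_, hy3⟩
      have := hy4 k
      rw [hk] at this
      exact this.le
    · -- exactly ν+1 sets: use the Radon argument
      have hcard : I.card = ν + 1 := le_antisymm hIcard hgt
      set f : Fin (ν + 1) → {θ // θ ∈ Θ} := fun j => I.toList.getD j θ0 with hfdef
      have hcov : ∀ θ ∈ I, ∃ j : Fin (ν + 1), f j = θ := by
        intro θ hθ
        have : θ ∈ I.toList := (Finset.mem_toList).2 hθ
        obtain ⟨i, hi, hgi⟩ := List.mem_iff_getElem.1 this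
        refine ⟨⟨i, by omega⟩, ?_⟩
        rw [hfdef]
        simp only []
        rw [List.getD_eq_getElem I.toList θ0 (hlen ▸ hi)]
        exact hgi
      -- for each j, a witness avoiding constraint j
      have hx : ∀ j : Fin (ν + 1), ∃ x, (x ∈ Ξ ∧ ψ x ≤ c ∧ ‖x‖ ≤ R) ∧
          ∀ k : Fin ν, g x (f (j.succAbove k)).1 < 0 := by
        intro j
        have hTTf : (fun k => (f (j.succAbove k)).1) ∈ TT := fun k => (f (j.succAbove k)).2
        obtain ⟨y, hy1, hy2, hy3, hy4⟩ := hW _ hTTf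
        exact ⟨y, ⟨hy1, hy2.le, hy3⟩, hy4⟩
      choose x hxK hxS using hx
      obtain ⟨q, hqK, hqS⟩ := radon_step
        (Ξ ∩ {x | ψ x ≤ c} ∩ Metric.closedBall 0 R)
        ((hΞconv.inter hψlev).inter (convex_closedBall 0 R))
        (fun θ : {θ // θ ∈ Θ} => {x | g x θ.1 ≤ 0}) hglev
        ξh (fun θ => (hξhg θ.1 θ.2).le)
        f x
        (fun j => ⟨⟨(hxK j).1, (hxK j).2.1⟩, mem_closedBall_zero_iff.2 (hxK j).2.2⟩)
        (fun j j' hjj' => by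
          obtain ⟨k, hk⟩ := Fin.exists_succAbove_eq (Ne.symm hjj')
          have := hxS j k
          rw [hk] at this
          exact this.le)
      refine ⟨q, Set.mem_biInter fun θ hθ => ?_⟩
      obtain ⟨j, hj⟩ := hcov θ hθ
      refine (hmemC θ q).2 ⟨hqK.1.1, hqK.1.2, ?_, mem_closedBall_zero_iff.1 hqK.2⟩
      have := hqS j
      rw [hj] at this
      exact this
  -- Helly for compact convex sets
  have hinter : (⋂ θ : {θ // θ ∈ Θ}, C θ).Nonempty := by
    refine Convex.helly_theorem_compact' (𝕜 := ℝ) hCconv hCcpt ?_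
    intro I hI
    refine h4 I ?_
    rwa [finrank_euclideanSpace_fin] at hI
  obtain ⟨z, hz⟩ := hinter
  have hzC : ∀ θ : {θ // θ ∈ Θ}, z ∈ C θ := Set.mem_iInter.1 hz
  obtain ⟨θ0, hθ0⟩ := hΘne
  have hz0 := (hmemC ⟨θ0, hθ0⟩ z).1 (hzC ⟨θ0, hθ0⟩)
  have hzFeas : z ∈ Feas :=
    ⟨hz0.1, fun θ hθ => ((hmemC ⟨θ, hθ⟩ z).1 (hzC ⟨θ, hθ⟩)).2.2.1⟩
  have : L ≤ ψ z := csInf_le (hbdd _) (Set.mem_image_of_mem ψ hzFeas)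
  linarith [hz0.2.1]
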